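/- Let n ≥ 1 and m ∈ ℝ. There exists a constant C > 0 such that for every real R ≥ 2 and every integer k with 2 ≤ k ≤ R, one has ∑_{ℓ ∈ ℤ^n, R√(1−1/k) ≤ |ℓ| ≤ R} (1+|ℓ|²)^{m/2} ≤ C R^{m+n} / k. -/

import Mathlib

open scoped BigOperators

/-- The embedding of the lattice `ℤ^n` into `ℝ^n`. -/
def latt {n : ℕ} (ℓ : Fin n → ℤ) : Fin n → ℝ := fun i => (ℓ i : ℝ)

/-- The Euclidean norm on `ℝ^n`. -/
noncomputable def enorm' {n : ℕ} (x : Fin n → ℝ) : ℝ := Real.sqrt (∑ i, x i ^ 2)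

open MeasureTheory Metric
open scoped ENNReal

lemma pow_gap {x y : ℝ} (hx : 0 ≤ x) (hxy : x ≤ y) (n : ℕ) :
    y ^ n - x ^ n ≤ n * y ^ (n - 1) * (y - x) := by
  induction n with
  | zero => simp
  | succ k ih =>
    have hy : 0 ≤ y := hx.trans hxy
    rcases Nat.eq_zero_or_pos k with rfl | hk
    · simp
    · have hyy : y * y ^ (k - 1) = y ^ k := by
        rw [← pow_succ', Nat.sub_add_cancel hk]
      have h2 : y * (y ^ k - x ^ k) ≤ y * (k * y ^ (k - 1) * (y - x)) :=
        mul_le_mul_of_nonneg_left ih hy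
      have h4 : (y - x) * x ^ k ≤ (y - x) * y ^ k :=
        mul_le_mul_of_nonneg_left (pow_le_pow_left₀ hx hxy k) (by linarith)
      have hk1 : (k + 1 : ℕ) - 1 = k := rfl
      calc y ^ (k + 1) - x ^ (k + 1) = y * (y ^ k - x ^ k) + (y - x) * x ^ k := by ring
        _ ≤ y * (k * y ^ (k - 1) * (y - x)) + (y - x) * y ^ k := by linarith
        _ = (k : ℝ) * (y * y ^ (k - 1)) * (y - x) + (y - x) * y ^ k := by ring
        _ = ((k : ℕ) + 1 : ℕ) * y ^ ((k + 1 : ℕ) - 1) * (y - x) := by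
            rw [hyy, hk1]; push_cast; ring

lemma count_le (n : ℕ) (hn : 1 ≤ n) (a b : ℝ) (hb : 0 ≤ b) (hab : a ≤ b)
    (F : Finset (Fin n → ℤ))
    (hF : ∀ ℓ ∈ F, a ≤ enorm' (latt ℓ) ∧ enorm' (latt ℓ) ≤ b) :
    (F.card : ℝ) ≤ (Real.sqrt Real.pi ^ n / Real.Gamma (n / 2 + 1)) *
      ((b + Real.sqrt n) ^ n - max (a - Real.sqrt n) 0 ^ n) := by
  haveI : Nonempty (Fin n) := ⟨⟨0, hn⟩⟩
  set E := EuclideanSpace ℝ (Fin n)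
  set f := (MeasurableEquiv.toLp 2 (Fin n → ℝ)).symm with hf
  set cube : (Fin n → ℤ) → Set E :=
    fun ℓ => f ⁻¹' (Set.pi Set.univ fun i => Set.Ico (ℓ i : ℝ) (ℓ i + 1)) with hcube
  have hvol : ∀ ℓ, volume (cube ℓ) = 1 := by
    intro ℓ
    rw [hcube]
    rw [(EuclideanSpace.volume_preserving_symm_measurableEquiv_toLp (Fin n)).measure_preimage
      (MeasurableSet.univ_pi fun i => measurableSet_Ico).nullMeasurableSet]
    rw [volume_pi_pi]
    simp
  have hmeas : ∀ ℓ, MeasurableSet (cube ℓ) := fun ℓ =>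
    f.measurable (MeasurableSet.univ_pi fun i => measurableSet_Ico)
  have hdisj : (↑F : Set (Fin n → ℤ)).PairwiseDisjoint cube := by
    intro ℓ _ ℓ' _ hne
    refine Set.disjoint_left.2 fun x hx hx' => hne ?_
    funext i
    have h1 := hx i (Set.mem_univ i)
    have h2 := hx' i (Set.mem_univ i)
    have e1 : ⌊x i⌋ = ℓ i := Int.floor_eq_iff.2 ⟨h1.1, h1.2⟩
    have e2 : ⌊x i⌋ = ℓ' i := Int.floor_eq_iff.2 ⟨h2.1, h2.2⟩
    rw [← e1, e2]
  -- inclusion in the fattened annulus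
  have hsub : ∀ ℓ ∈ F, cube ℓ ⊆
      closedBall (0 : E) (b + Real.sqrt n) \ ball (0 : E) (a - Real.sqrt n) := by
    intro ℓ hℓ x hx
    set y : E := (WithLp.equiv 2 (Fin n → ℝ)).symm (latt ℓ) with hy
    have hny : ‖y‖ = enorm' (latt ℓ) := by
      rw [EuclideanSpace.norm_eq, enorm']
      simp [hy, Real.norm_eq_abs, sq_abs]
    have hxy : ‖x - y‖ ≤ Real.sqrt n := by
      rw [EuclideanSpace.norm_eq]
      have : ∑ i, ‖(x - y) i‖ ^ 2 ≤ (n : ℝ) := by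
        have : ∀ i ∈ Finset.univ, ‖(x - y) i‖ ^ 2 ≤ 1 := by
          intro i _
          have h1 := hx i (Set.mem_univ i)
          have hfx : f x i = x i := rfl
          rw [hfx] at h1
          have : (x - y) i = x i - (ℓ i : ℝ) := rfl
          rw [this, Real.norm_eq_abs, sq_abs]
          nlinarith [h1.1, h1.2]
        calc ∑ i, ‖(x - y) i‖ ^ 2 ≤ ∑ _i : Fin n, (1 : ℝ) :=
              Finset.sum_le_sum this
          _ = (n : ℝ) := by simp
      calc Real.sqrt (∑ i, ‖(x - y) i‖ ^ 2) ≤ Real.sqrt (n : ℝ) :=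
            Real.sqrt_le_sqrt this
        _ = Real.sqrt n := by norm_num
    have hbnd := hF ℓ hℓ
    constructor
    · rw [mem_closedBall_zero_iff]
      calc ‖x‖ ≤ ‖y‖ + ‖x - y‖ := by
            have := norm_add_le y (x - y); simpa using this
        _ ≤ b + Real.sqrt n := add_le_add (hny ▸ hbnd.2) hxy
    · intro hmem
      rw [mem_ball_zero_iff] at hmem
      have : ‖y‖ - ‖x - y‖ ≤ ‖x‖ := by
        have := norm_sub_norm_le y x
        have h2 : ‖y - x‖ = ‖x - y‖ := norm_sub_rev y x
        linarith
      rw [hny] at this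
      linarith [hbnd.1]
  -- measure counting
  set cR := Real.sqrt Real.pi ^ n / Real.Gamma (n / 2 + 1) with hcR
  have hcRpos : 0 < cR := by
    apply div_pos
    · positivity
    · exact Real.Gamma_pos_of_pos (by positivity)
  have key : volume (ball (0 : E) (a - Real.sqrt n)) + (F.card : ℝ≥0∞) ≤
      volume (closedBall (0 : E) (b + Real.sqrt n)) := by
    have hU : volume (⋃ ℓ ∈ F, cube ℓ) = (F.card : ℝ≥0∞) := by
      rw [measure_biUnion_finset hdisj fun ℓ _ => hmeas ℓ]
      simp [hvol]
    have hUsub : (⋃ ℓ ∈ F, cube ℓ) ⊆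
        closedBall (0 : E) (b + Real.sqrt n) \ ball (0 : E) (a - Real.sqrt n) := by
      exact Set.iUnion₂_subset hsub
    have hdisj2 : Disjoint (ball (0 : E) (a - Real.sqrt n)) (⋃ ℓ ∈ F, cube ℓ) := by
      refine Set.disjoint_left.2 fun x hx hx' => ?_
      exact (hUsub hx').2 hx
    calc volume (ball (0 : E) (a - Real.sqrt n)) + (F.card : ℝ≥0∞)
        = volume (ball (0 : E) (a - Real.sqrt n) ∪ ⋃ ℓ ∈ F, cube ℓ) := by
          rw [measure_union hdisj2 (MeasurableSet.biUnion F.countable_toSet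
            fun ℓ _ => hmeas ℓ), hU]
      _ ≤ volume (closedBall (0 : E) (b + Real.sqrt n)) := by
          apply measure_mono
          refine Set.union_subset (ball_subset_closedBall.trans
            (closedBall_subset_closedBall (by linarith [Real.sqrt_nonneg (n:ℝ)])))
            fun x hx => (hUsub hx).1
  have hballvol : volume (ball (0 : E) (a - Real.sqrt n)) =
      ENNReal.ofReal (max (a - Real.sqrt n) 0 ^ n) * ENNReal.ofReal cR := by
    rw [EuclideanSpace.volume_ball, Fintype.card_fin]
    congr 1
    have h0 : ENNReal.ofReal (a - Real.sqrt n) =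
        ENNReal.ofReal (max (a - Real.sqrt n) 0) := by
      rcases le_total (a - Real.sqrt n) 0 with h | h
      · rw [max_eq_right h, ENNReal.ofReal_eq_zero.2 h, ENNReal.ofReal_zero]
      · rw [max_eq_left h]
    rw [h0, ← ENNReal.ofReal_pow (le_max_right _ _)]
  have hcbvol : volume (closedBall (0 : E) (b + Real.sqrt n)) =
      ENNReal.ofReal ((b + Real.sqrt n) ^ n) * ENNReal.ofReal cR := by
    rw [EuclideanSpace.volume_closedBall, Fintype.card_fin,
      ← ENNReal.ofReal_pow (by positivity)]
  rw [hballvol, hcbvol] at key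
  have hreal : max (a - Real.sqrt n) 0 ^ n * cR + (F.card : ℝ) ≤
      (b + Real.sqrt n) ^ n * cR := by
    have := ENNReal.toReal_mono (by
      exact ENNReal.mul_ne_top ENNReal.ofReal_ne_top ENNReal.ofReal_ne_top) key
    rw [ENNReal.toReal_add (ENNReal.mul_ne_top ENNReal.ofReal_ne_top ENNReal.ofReal_ne_top)
      (ENNReal.natCast_ne_top _), ENNReal.toReal_mul, ENNReal.toReal_mul,
      ENNReal.toReal_ofReal (by positivity), ENNReal.toReal_ofReal (by positivity),
      ENNReal.toReal_ofReal (by positivity), ENNReal.toReal_natCast] at this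
    linarith
  nlinarith [hreal]


set_option maxHeartbeats 1000000 in
/-- The lattice sum of `⟨ℓ⟩^m` over the thin annulus `R√(1 - 1/k) ≤ |ℓ| ≤ R` is bounded by
`C R^{m+n} / k`, uniformly in `R ≥ 2` and `2 ≤ k ≤ R`. -/
theorem thin_annulus_lattice_sum (n : ℕ) (hn : 1 ≤ n) (m : ℝ) :
    ∃ C > 0, ∀ R : ℝ, 2 ≤ R → ∀ k : ℕ, 2 ≤ k → (k : ℝ) ≤ R →
      (∑' ℓ : {ℓ : Fin n → ℤ //
          R * Real.sqrt (1 - 1 / (k : ℝ)) ≤ enorm' (latt ℓ) ∧ enorm' (latt ℓ) ≤ R},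
          ((1 : ℝ) + ∑ i, ((ℓ : Fin n → ℤ) i : ℝ) ^ 2) ^ (m / 2))
        ≤ C * R ^ (m + (n : ℝ)) / (k : ℝ) := by
  have hnpos : (0 : ℝ) < n := by exact_mod_cast hn
  set cR := Real.sqrt Real.pi ^ n / Real.Gamma (n / 2 + 1) with hcR
  have hcRpos : 0 < cR :=
    div_pos (by positivity) (Real.Gamma_pos_of_pos (by positivity))
  set sn := Real.sqrt n with hsn
  have hsn0 : 0 ≤ sn := Real.sqrt_nonneg _
  set D := cR * n * (1 + sn) ^ (n - 1) * (1 + 2 * sn) with hD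
  have hDpos : 0 < D :=
    mul_pos (mul_pos (mul_pos hcRpos hnpos) (pow_pos (by linarith) _)) (by linarith)
  have h2pos : (0:ℝ) < 2 ^ (|m| / 2) := Real.rpow_pos_of_pos two_pos _
  refine ⟨2 ^ (|m| / 2) * D, mul_pos h2pos hDpos, ?_⟩
  intro R hR k hk2 hkR
  have hR0 : (0 : ℝ) < R := by linarith
  have hk0 : (0 : ℝ) < k := by exact_mod_cast Nat.lt_of_lt_of_le (by norm_num) hk2
  have hk2' : (2 : ℝ) ≤ k := by exact_mod_cast hk2
  have hRk : (1 : ℝ) ≤ R / k := (one_le_div hk0).2 hkR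
  set a := R * Real.sqrt (1 - 1 / (k : ℝ)) with ha
  have hkinv : 1 / (k : ℝ) ≤ 1 / 2 := by
    apply div_le_div_of_nonneg_left one_pos.le two_pos hk2'
  have ht0 : 0 ≤ 1 - 1 / (k : ℝ) := by linarith
  have ht1 : 1 - 1 / (k : ℝ) ≤ 1 := by
    have : 0 ≤ 1 / (k : ℝ) := by positivity
    linarith
  have hsqrt1 : Real.sqrt (1 - 1 / (k : ℝ)) ≤ 1 := by
    rw [show (1 : ℝ) = Real.sqrt 1 by simp]
    exact Real.sqrt_le_sqrt (by simpa using ht1)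
  have ha0 : 0 ≤ a := mul_nonneg hR0.le (Real.sqrt_nonneg _)
  have haR : a ≤ R := by
    calc a ≤ R * 1 := mul_le_mul_of_nonneg_left hsqrt1 hR0.le
      _ = R := mul_one R
  -- finiteness of the annulus set
  set S := {ℓ : Fin n → ℤ | a ≤ enorm' (latt ℓ) ∧ enorm' (latt ℓ) ≤ R} with hSdef
  have hcoord : ∀ ℓ ∈ S, ∀ i, ℓ i ∈ Set.Icc (-⌈R⌉) ⌈R⌉ := by
    intro ℓ hℓ i
    have h1 : ((ℓ i : ℝ)) ^ 2 ≤ ∑ j, (latt ℓ j) ^ 2 :=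
      Finset.single_le_sum (f := fun j => (latt ℓ j) ^ 2)
        (fun j _ => sq_nonneg _) (Finset.mem_univ i)
    have h2 : |(ℓ i : ℝ)| ≤ R := by
      calc |(ℓ i : ℝ)| = Real.sqrt (((ℓ i : ℝ)) ^ 2) := (Real.sqrt_sq_eq_abs _).symm
        _ ≤ Real.sqrt (∑ j, (latt ℓ j) ^ 2) := Real.sqrt_le_sqrt h1
        _ ≤ R := hℓ.2
    have h3 : (|ℓ i| : ℝ) ≤ (⌈R⌉ : ℝ) := by
      push_cast
      calc |(ℓ i : ℝ)| ≤ R := h2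
        _ ≤ ⌈R⌉ := Int.le_ceil R
    have h4 : |ℓ i| ≤ ⌈R⌉ := by exact_mod_cast h3
    exact Set.mem_Icc.2 (abs_le.1 h4)
  have hfin : S.Finite := by
    apply Set.Finite.subset
      (Set.Finite.pi fun i : Fin n => Set.finite_Icc (-⌈R⌉) ⌈R⌉)
    intro ℓ hℓ
    exact fun i _ => hcoord ℓ hℓ i
  haveI hFT : Fintype {ℓ : Fin n → ℤ // a ≤ enorm' (latt ℓ) ∧ enorm' (latt ℓ) ≤ R} :=
    hfin.fintype
  rw [tsum_fintype]
  set B := 2 ^ (|m| / 2) * R ^ m with hB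
  have hRm0 : (0 : ℝ) < R ^ m := Real.rpow_pos_of_pos hR0 m
  have hBpos : 0 < B := mul_pos h2pos hRm0
  -- bound for each term
  have hterm : ∀ ℓ : {ℓ : Fin n → ℤ // a ≤ enorm' (latt ℓ) ∧ enorm' (latt ℓ) ≤ R},
      ((1 : ℝ) + ∑ i, ((ℓ : Fin n → ℤ) i : ℝ) ^ 2) ^ (m / 2) ≤ B := by
    rintro ⟨ℓ, hℓa, hℓR⟩
    set s := ∑ i, ((ℓ i : ℝ)) ^ 2 with hs
    have hs_enorm : enorm' (latt ℓ) = Real.sqrt s := rfl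
    rw [hs_enorm] at hℓa hℓR
    have hs0 : 0 ≤ s := Finset.sum_nonneg fun i _ => sq_nonneg _
    have hsqs : Real.sqrt s ^ 2 = s := Real.sq_sqrt hs0
    have hsup : s ≤ R ^ 2 := by
      have hsq2 := pow_le_pow_left₀ (Real.sqrt_nonneg s) hℓR 2
      rwa [hsqs] at hsq2
    have hsqt : Real.sqrt (1 - 1 / (k : ℝ)) ^ 2 = 1 - 1 / (k : ℝ) := Real.sq_sqrt ht0
    have hslow : R ^ 2 * (1 - 1 / (k : ℝ)) ≤ s := by
      have hsq2 := pow_le_pow_left₀ ha0 hℓa 2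
      rw [ha, mul_pow, hsqt, hsqs] at hsq2
      exact hsq2
    have h1 : R ^ 2 / 2 ≤ 1 + s := by nlinarith
    have h2 : 1 + s ≤ 2 * R ^ 2 := by nlinarith
    have hRsq : (R ^ 2 : ℝ) ^ (m / 2) = R ^ m := by
      rw [← Real.rpow_natCast R 2, ← Real.rpow_mul hR0.le]
      norm_num
      congr 1
      ring
    rcases le_total 0 m with hm | hm
    · calc ((1 : ℝ) + s) ^ (m / 2) ≤ (2 * R ^ 2) ^ (m / 2) :=
            Real.rpow_le_rpow (by linarith) h2 (by linarith)
        _ = 2 ^ (m / 2) * (R ^ 2) ^ (m / 2) := Real.mul_rpow (by norm_num) (sq_nonneg R)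
        _ = 2 ^ (m / 2) * R ^ m := by rw [hRsq]
        _ ≤ B := by
            rw [hB]
            apply mul_le_mul_of_nonneg_right _ hRm0.le
            exact Real.rpow_le_rpow_of_exponent_le one_le_two
              (by have := le_abs_self m; linarith)
    · calc ((1 : ℝ) + s) ^ (m / 2) ≤ (R ^ 2 / 2) ^ (m / 2) :=
            Real.rpow_le_rpow_of_nonpos (by positivity) h1 (by linarith)
        _ = (R ^ 2) ^ (m / 2) / 2 ^ (m / 2) := Real.div_rpow (sq_nonneg R) (by norm_num) (m / 2)
        _ = R ^ m * 2 ^ (-(m / 2)) := by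
            rw [hRsq, Real.rpow_neg (by norm_num : (0:ℝ) ≤ 2), div_eq_mul_inv]
        _ = B := by
            rw [hB, mul_comm]
            congr 2
            rw [abs_of_nonpos hm]
            ring
  -- sum ≤ card * B
  have hsumB : (∑ ℓ : {ℓ : Fin n → ℤ // a ≤ enorm' (latt ℓ) ∧ enorm' (latt ℓ) ≤ R},
      ((1 : ℝ) + ∑ i, ((ℓ : Fin n → ℤ) i : ℝ) ^ 2) ^ (m / 2)) ≤
      (Fintype.card {ℓ : Fin n → ℤ // a ≤ enorm' (latt ℓ) ∧ enorm' (latt ℓ) ≤ R} : ℝ) * B := by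
    have := Finset.sum_le_card_nsmul Finset.univ
      (fun ℓ : {ℓ : Fin n → ℤ // a ≤ enorm' (latt ℓ) ∧ enorm' (latt ℓ) ≤ R} =>
        ((1 : ℝ) + ∑ i, ((ℓ : Fin n → ℤ) i : ℝ) ^ 2) ^ (m / 2)) B
      (fun ℓ _ => hterm ℓ)
    rwa [Finset.card_univ, nsmul_eq_mul] at this
  -- the count via image finset
  set F : Finset (Fin n → ℤ) := Finset.image Subtype.val
    (Finset.univ : Finset {ℓ : Fin n → ℤ // a ≤ enorm' (latt ℓ) ∧ enorm' (latt ℓ) ≤ R})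
    with hFdef
  have hFmem : ∀ ℓ ∈ F, a ≤ enorm' (latt ℓ) ∧ enorm' (latt ℓ) ≤ R := by
    intro ℓ hℓ
    rcases Finset.mem_image.1 hℓ with ⟨⟨ℓ', hℓ'⟩, _, rfl⟩
    exact hℓ'
  have hFcard : (Fintype.card {ℓ : Fin n → ℤ // a ≤ enorm' (latt ℓ) ∧ enorm' (latt ℓ) ≤ R} : ℝ)
      = F.card := by
    rw [hFdef, Finset.card_image_of_injective _ Subtype.val_injective, Finset.card_univ]
  have hcount := count_le n hn a R (by linarith) haR F hFmem
  -- geometric estimates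
  set a2 := max (a - sn) 0 with ha2
  have ha2nn : 0 ≤ a2 := le_max_right _ _
  have ha2le : a2 ≤ R + sn := max_le (by linarith) (by linarith)
  have hgap : (R + sn) ^ n - a2 ^ n ≤ n * (R + sn) ^ (n - 1) * ((R + sn) - a2) :=
    pow_gap ha2nn ha2le n
  have hwidth : (R + sn) - a2 ≤ (1 + 2 * sn) * (R / k) := by
    have h1 : a - sn ≤ a2 := le_max_left _ _
    have h2 : R - a ≤ R / k := by
      have hts : (1 - 1 / (k : ℝ)) ≤ Real.sqrt (1 - 1 / (k : ℝ)) := by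
        have hsq := Real.sq_sqrt ht0
        nlinarith [Real.sqrt_nonneg (1 - 1 / (k : ℝ)), hsqrt1]
      calc R - a = R * (1 - Real.sqrt (1 - 1 / (k : ℝ))) := by rw [ha]; ring
        _ ≤ R * (1 / k) := mul_le_mul_of_nonneg_left (by linarith) hR0.le
        _ = R / k := by ring
    have h3 : 2 * sn ≤ 2 * sn * (R / k) := le_mul_of_one_le_right (by positivity) hRk
    calc (R + sn) - a2 ≤ (R - a) + 2 * sn := by linarith
      _ ≤ R / k + 2 * sn * (R / k) := by linarith
      _ = (1 + 2 * sn) * (R / k) := by ring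
  have hRsn : R + sn ≤ (1 + sn) * R := by nlinarith
  have hgap0 : 0 ≤ (R + sn) - a2 := by linarith
  have hN : (F.card : ℝ) ≤ D * R ^ n / k := by
    have hpow1 : (R + sn) ^ (n - 1) ≤ ((1 + sn) * R) ^ (n - 1) :=
      pow_le_pow_left₀ (by linarith) hRsn _
    calc (F.card : ℝ) ≤ cR * ((R + sn) ^ n - a2 ^ n) := hcount
      _ ≤ cR * (n * (R + sn) ^ (n - 1) * ((R + sn) - a2)) :=
          mul_le_mul_of_nonneg_left hgap hcRpos.le
      _ ≤ cR * (n * ((1 + sn) * R) ^ (n - 1) * ((1 + 2 * sn) * (R / k))) := by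
          apply mul_le_mul_of_nonneg_left _ hcRpos.le
          apply mul_le_mul
          · exact mul_le_mul_of_nonneg_left hpow1 (Nat.cast_nonneg n)
          · exact hwidth
          · exact hgap0
          · positivity
      _ = D * R ^ n / k := by
          rw [hD, mul_pow]
          have hpow : R ^ (n - 1) * R = R ^ n := by
            rw [← pow_succ, Nat.sub_add_cancel hn]
          field_simp
          ring_nf
          rw [← hpow]
          ring
  -- final assembly
  have hRmn : R ^ (m + (n : ℝ)) = R ^ m * R ^ n := by
    rw [Real.rpow_add hR0, Real.rpow_natCast]
  calc (∑ ℓ : {ℓ : Fin n → ℤ // a ≤ enorm' (latt ℓ) ∧ enorm' (latt ℓ) ≤ R},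
        ((1 : ℝ) + ∑ i, ((ℓ : Fin n → ℤ) i : ℝ) ^ 2) ^ (m / 2))
      ≤ (Fintype.card {ℓ : Fin n → ℤ // a ≤ enorm' (latt ℓ) ∧ enorm' (latt ℓ) ≤ R} : ℝ) * B :=
        hsumB
    _ = (F.card : ℝ) * B := by rw [hFcard]
    _ ≤ (D * R ^ n / k) * B := mul_le_mul_of_nonneg_right hN hBpos.le
    _ = 2 ^ (|m| / 2) * D * R ^ (m + (n : ℝ)) / k := by
        rw [hRmn, hB]
        ring
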